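/- Let n ≥ 2 be an integer, r > 0, and let f : [0,r] → ℝ be continuous with f(0) = 0 and f(t) > 0 for all t ∈ (0,r]. Set S(t) = f(t)^{n-1}, V(t) = ∫₀^t S(s) ds, and Λ = inf_{0 < t ≤ r} (1/4)·(S(t)/V(t))². Then for every continuously differentiable function u : [0,r] → ℝ with u(r) = 0, ∫₀^r u'(t)²·S(t) dt ≥ Λ·∫₀^r u(t)²·S(t) dt. -/

import Mathlib

open Set MeasureTheory intervalIntegral

/-- Radial form of the eigenvalue/Rayleigh-quotient bound: with `S(t) = f(t)^(n-1)`,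
`V(t) = ∫₀^t S`, `Λ = inf_{0<t≤r} (1/4)(S(t)/V(t))²`, every `C¹` function `u` on `[0,r]`
with `u(r) = 0` satisfies `∫₀^r u'² S ≥ Λ ∫₀^r u² S`. -/
theorem stmt_9 (n : ℕ) (hn : 2 ≤ n) (r : ℝ) (hr : 0 < r) (f : ℝ → ℝ)
    (hf_cont : ContinuousOn f (Set.Icc 0 r)) (hf0 : f 0 = 0)
    (hf_pos : ∀ t ∈ Set.Ioc 0 r, 0 < f t)
    (S V : ℝ → ℝ) (hS : ∀ t, S t = f t ^ (n - 1))
    (hV : ∀ t, V t = ∫ s in (0:ℝ)..t, S s)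
    (Λ : ℝ) (hΛ : Λ = sInf ((fun t => (1 / 4) * (S t / V t) ^ 2) '' Set.Ioc 0 r))
    (u u' : ℝ → ℝ)
    (hu : ∀ t ∈ Set.Icc 0 r, HasDerivWithinAt u (u' t) (Set.Icc 0 r) t)
    (hu'_cont : ContinuousOn u' (Set.Icc 0 r))
    (hur : u r = 0) :
    (∫ t in (0:ℝ)..r, u' t ^ 2 * S t) ≥ Λ * ∫ t in (0:ℝ)..r, u t ^ 2 * S t := by
  have hre : (0:ℝ) ≤ r := hr.le
  have huIcc : Set.uIcc (0:ℝ) r = Set.Icc 0 r := Set.uIcc_of_le hre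
  -- facts about S
  have hS_cont : ContinuousOn S (Set.Icc 0 r) := by
    have h1 : ContinuousOn (fun t => f t ^ (n - 1)) (Set.Icc 0 r) := hf_cont.pow _
    exact h1.congr fun t _ => hS t
  have hS_pos : ∀ t ∈ Set.Ioc 0 r, 0 < S t := fun t ht => by
    rw [hS]; exact pow_pos (hf_pos t ht) _
  have hS_nonneg : ∀ t ∈ Set.Icc 0 r, 0 ≤ S t := by
    intro t ht
    rcases eq_or_lt_of_le ht.1 with h | h
    · rw [hS, ← h, hf0, zero_pow (by omega)]
    · exact (hS_pos t ⟨h, ht.2⟩).le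
  have hS_int : IntervalIntegrable S volume 0 r :=
    (huIcc ▸ hS_cont).intervalIntegrable
  -- facts about V
  have hV0 : V 0 = 0 := by rw [hV]; simp
  have hVfun : V = fun x => ∫ s in (0:ℝ)..x, S s := funext hV
  have hV_cont : ContinuousOn V (Set.Icc 0 r) := by
    rw [hVfun]
    have := continuousOn_primitive_interval (a := (0:ℝ)) (b := r) (f := S) (μ := volume)
      (by rw [huIcc]; exact (intervalIntegrable_iff_integrableOn_Icc_of_le hre).mp hS_int)
    rwa [huIcc] at this
  have hV_pos : ∀ t ∈ Set.Ioc 0 r, 0 < V t := by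
    intro t ht
    rw [hV]
    refine intervalIntegral_pos_of_pos_on ?_ ?_ ht.1
    · exact hS_int.mono_set (by rw [huIcc, Set.uIcc_of_le ht.1.le]; exact Set.Icc_subset_Icc_right ht.2)
    · intro x hx; exact hS_pos x ⟨hx.1, hx.2.le.trans ht.2⟩
  have hV_nonneg : ∀ t ∈ Set.Icc 0 r, 0 ≤ V t := by
    intro t ht
    rcases eq_or_lt_of_le ht.1 with h | h
    · rw [← h, hV0]
    · exact (hV_pos t ⟨h, ht.2⟩).le
  have hV_deriv : ∀ t ∈ Set.Ioo 0 r, HasDerivAt V (S t) t := by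
    intro t ht
    rw [hVfun]
    have hmem : Set.Icc (0:ℝ) r ∈ nhds t := Icc_mem_nhds ht.1 ht.2
    refine integral_hasDerivAt_right
      (hS_int.mono_set (by rw [huIcc, Set.uIcc_of_le ht.1.le]; exact Set.Icc_subset_Icc_right ht.2.le))
      ?_ ?_
    · exact ContinuousOn.stronglyMeasurableAtFilter isOpen_Ioo
        (hS_cont.mono Set.Ioo_subset_Icc_self) t ht
    · exact (hS_cont t ⟨ht.1.le, ht.2.le⟩).continuousAt hmem
  -- facts about u
  have hu_cont : ContinuousOn u (Set.Icc 0 r) := fun t ht => (hu t ht).continuousWithinAt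
  have hu0V : u 0 ^ 2 * V 0 = 0 := by rw [hV0]; ring
  -- integrability of the relevant integrands
  have hA_int : IntervalIntegrable (fun t => u t ^ 2 * S t) volume 0 r :=
    (huIcc ▸ ((hu_cont.pow 2).mul hS_cont)).intervalIntegrable
  have hB_int : IntervalIntegrable (fun t => u' t ^ 2 * S t) volume 0 r :=
    (huIcc ▸ ((hu'_cont.pow 2).mul hS_cont)).intervalIntegrable
  have hC_int : IntervalIntegrable (fun t => 2 * u t * u' t * V t) volume 0 r :=
    (huIcc ▸ (((continuousOn_const.mul hu_cont).mul hu'_cont).mul hV_cont)).intervalIntegrable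
  -- nonnegativity of the two integrals
  have hA_nonneg : 0 ≤ ∫ t in (0:ℝ)..r, u t ^ 2 * S t := by
    refine intervalIntegral.integral_nonneg hre fun t ht => ?_
    exact mul_nonneg (sq_nonneg _) (hS_nonneg t ht)
  have hB_nonneg : 0 ≤ ∫ t in (0:ℝ)..r, u' t ^ 2 * S t := by
    refine intervalIntegral.integral_nonneg hre fun t ht => ?_
    exact mul_nonneg (sq_nonneg _) (hS_nonneg t ht)
  -- trivial case Λ ≤ 0
  rcases le_or_gt Λ 0 with hΛle | hΛpos
  · have : Λ * ∫ t in (0:ℝ)..r, u t ^ 2 * S t ≤ 0 := mul_nonpos_of_nonpos_of_nonneg hΛle hA_nonneg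
    linarith
  -- main case: Λ > 0
  -- key pointwise bound from the infimum
  have hΛ_le : ∀ t ∈ Set.Ioc 0 r, Λ ≤ (1 / 4) * (S t / V t) ^ 2 := by
    intro t ht
    rw [hΛ]
    refine csInf_le ⟨0, ?_⟩ ⟨t, ht, rfl⟩
    rintro y ⟨s, hs, rfl⟩
    positivity
  -- integration by parts : ∫ u² S = - ∫ 2 u u' V
  have hIBP : (∫ t in (0:ℝ)..r, u t ^ 2 * S t) = - ∫ t in (0:ℝ)..r, 2 * u t * u' t * V t := by
    have hg_cont : ContinuousOn (fun t => u t ^ 2 * V t) (Set.Icc 0 r) := (hu_cont.pow 2).mul hV_cont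
    have hg_deriv : ∀ t ∈ Set.Ioo 0 r,
        HasDerivWithinAt (fun t => u t ^ 2 * V t)
          (2 * u t * u' t * V t + u t ^ 2 * S t) (Set.Ioi t) t := by
      intro t ht
      have hmem : Set.Icc (0:ℝ) r ∈ nhds t := Icc_mem_nhds ht.1 ht.2
      have hu' : HasDerivAt u (u' t) t := (hu t ⟨ht.1.le, ht.2.le⟩).hasDerivAt hmem
      have h : HasDerivAt (fun t => u t ^ 2 * V t) (↑2 * u t ^ (2 - 1) * u' t * V t + u t ^ 2 * S t) t :=
        ((hu'.pow 2).mul (hV_deriv t ht))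
      have : HasDerivAt (fun t => u t ^ 2 * V t) (2 * u t * u' t * V t + u t ^ 2 * S t) t := by
        convert h using 1; push_cast; ring
      exact this.hasDerivWithinAt
    have hsum_int : IntervalIntegrable (fun t => 2 * u t * u' t * V t + u t ^ 2 * S t) volume 0 r :=
      hC_int.add hA_int
    have hftc := integral_eq_sub_of_hasDeriv_right_of_le hre hg_cont hg_deriv hsum_int
    rw [hur, hu0V] at hftc
    have hsplit : (∫ t in (0:ℝ)..r, (2 * u t * u' t * V t + u t ^ 2 * S t))
        = (∫ t in (0:ℝ)..r, 2 * u t * u' t * V t) + ∫ t in (0:ℝ)..r, u t ^ 2 * S t :=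
      intervalIntegral.integral_add hC_int hA_int
    rw [hsplit] at hftc
    linarith [hftc]
  -- pointwise AM-GM bound
  have hpw : ∀ t ∈ Set.Icc 0 r,
      -(2 * u t * u' t * V t) ≤ 1/2 * (u t ^ 2 * S t) + 1/(2*Λ) * (u' t ^ 2 * S t) := by
    intro t ht
    rcases eq_or_lt_of_le ht.1 with h | h
    · have hS0 : S t = 0 := by rw [hS, ← h, hf0, zero_pow (by omega)]
      have hV0' : V t = 0 := by rw [← h, hV0]
      rw [hS0, hV0']; simp
    · have htIoc : t ∈ Set.Ioc 0 r := ⟨h, ht.2⟩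
      have hs : 0 < S t := hS_pos t htIoc
      have hv : 0 < V t := hV_pos t htIoc
      have hkey : 4 * Λ * V t ^ 2 ≤ S t ^ 2 := by
        have h1 := hΛ_le t htIoc
        rw [div_pow] at h1
        have h2 : Λ * (V t ^ 2) ≤ 1/4 * (S t ^ 2) := by
          rw [← le_div_iff₀ (by positivity)] at *
          calc Λ ≤ 1/4 * (S t ^ 2 / V t ^ 2) := h1
            _ = 1/4 * (S t ^2) / V t ^2 := by ring
        linarith
      have h2Λ : (0:ℝ) < 2 * Λ := by linarith
      rw [← sub_nonneg]
      have hexp : (1/2 * (u t ^ 2 * S t) + 1/(2*Λ) * (u' t ^ 2 * S t)) - (-(2 * u t * u' t * V t))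
          = (Λ * u t ^ 2 * S t + u' t ^ 2 * S t + 4 * Λ * (u t * u' t) * V t) / (2 * Λ) := by
        field_simp; ring
      rw [hexp]
      apply div_nonneg _ h2Λ.le
      nlinarith [sq_nonneg (u t * S t + 2 * V t * u' t), mul_nonneg (sq_nonneg (u' t))
        (sub_nonneg.mpr hkey), mul_pos hΛpos hs, hs, hv, sq_nonneg (u' t)]
  -- integrate the pointwise bound
  have hRHS_int : IntervalIntegrable
      (fun t => 1/2 * (u t ^ 2 * S t) + 1/(2*Λ) * (u' t ^ 2 * S t)) volume 0 r :=
    (hA_int.const_mul _).add (hB_int.const_mul _)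
  have hmono : (∫ t in (0:ℝ)..r, -(2 * u t * u' t * V t))
      ≤ ∫ t in (0:ℝ)..r, (1/2 * (u t ^ 2 * S t) + 1/(2*Λ) * (u' t ^ 2 * S t)) :=
    intervalIntegral.integral_mono_on hre hC_int.neg hRHS_int hpw
  rw [intervalIntegral.integral_neg] at hmono
  rw [intervalIntegral.integral_add (hA_int.const_mul _) (hB_int.const_mul _),
    intervalIntegral.integral_const_mul, intervalIntegral.integral_const_mul] at hmono
  rw [← hIBP] at hmono
  -- conclude
  set A := ∫ t in (0:ℝ)..r, u t ^ 2 * S t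
  set B := ∫ t in (0:ℝ)..r, u' t ^ 2 * S t
  -- A ≤ A/2 + B/(2Λ)  ⇒  Λ A ≤ B
  rw [ge_iff_le]
  have h2Λ : (0:ℝ) < 2 * Λ := by linarith
  have h1 : A - 1/2 * A ≤ 1/(2*Λ) * B := by linarith
  have h2 : 1/2 * A ≤ 1/(2*Λ) * B := by linarith
  calc Λ * A = (2*Λ) * (1/2 * A) := by ring
    _ ≤ (2*Λ) * (1/(2*Λ) * B) := by exact mul_le_mul_of_nonneg_left h2 h2Λ.le
    _ = B := by field_simp
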